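/- If f : H = ∏_{i∈I} H_i → K is a surjective homomorphism of groups, and K has chain condition on almost direct factors (every ascending chain of almost direct factors of K terminates), then there exist finitely many ultrafilters U_0, …, U_{n-1} on I such that the composite map H → K → K/Z(K) factors through the natural map H → H/U_0 × … × H/U_{n-1}, where Z(K) denotes the center of K. -/

import Mathlib

universe u

/-- The setoid on a dependent product given by a filter. -/
def redSetoid {I : Type u} (F : Filter I) (A : I → Type u) : Setoid (∀ i, A i) where
  r a b := {i | a i = b i} ∈ F
  iseqv := by
    refine ⟨fun a => ?_, fun {a b} h => ?_, fun {a b c} h₁ h₂ => ?_⟩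
    · simp
    · simpa [eq_comm] using h
    · exact Filter.mem_of_superset (Filter.inter_mem h₁ h₂)
        (fun i hi => hi.1.trans hi.2)

/-- The reduced product of a family of sets with respect to a filter. -/
def ReducedProduct {I : Type u} (F : Filter I) (A : I → Type u) : Type u :=
  Quotient (redSetoid F A)

/-- The canonical quotient map onto a reduced product. -/
def reducedMk {I : Type u} (F : Filter I) (A : I → Type u) (a : ∀ i, A i) :
    ReducedProduct F A :=
  Quotient.mk (redSetoid F A) a

open Pointwise

/-- Normal subgroups `K₀, K₁` form a pair of almost direct factors of `K` if
each is the centralizer of the other and their product `K₀K₁` is all of `K`. -/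
def IsAlmostDirectFactorPairGrp {K : Type u} [Group K] (K₀ K₁ : Subgroup K) : Prop :=
  K₀.Normal ∧ K₁.Normal ∧
    K₀ = Subgroup.centralizer (K₁ : Set K) ∧
    K₁ = Subgroup.centralizer (K₀ : Set K) ∧
    (K₀ : Set K) * (K₁ : Set K) = Set.univ

/-- An almost direct factor of a group `K`. -/
def IsAlmostDirectFactorGrp {K : Type u} [Group K] (K₀ : Subgroup K) : Prop :=
  ∃ K₁, IsAlmostDirectFactorPairGrp K₀ K₁

namespace ADFaux

open Classical

variable {I : Type u} {H : I → Type u} [∀ i, Group (H i)] {K : Type u} [Group K]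

/-- The subgroup of the product supported in `J`. -/
def suppIn (H : I → Type u) [∀ i, Group (H i)] (J : Set I) : Subgroup (∀ i, H i) where
  carrier := {a | ∀ i, i ∉ J → a i = 1}
  one_mem' := fun i _ => rfl
  mul_mem' := fun {a b} ha hb i hi => by
    simp [Pi.mul_apply, ha i hi, hb i hi]
  inv_mem' := fun {a} ha i hi => by
    simp [Pi.inv_apply, ha i hi]

lemma mem_suppIn {J : Set I} {a : ∀ i, H i} :
    a ∈ suppIn H J ↔ ∀ i, i ∉ J → a i = 1 := Iff.rfl

instance suppIn_normal (J : Set I) : (suppIn H J).Normal := by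
  constructor
  intro a ha g i hi
  simp [mem_suppIn.mp ha i hi]

variable (f : (∀ i, H i) →* K)

/-- `J` is small if everything supported in `J` maps into the center. -/
def Small (J : Set I) : Prop :=
  ∀ a : ∀ i, H i, (∀ i, i ∉ J → a i = 1) → f a ∈ Subgroup.center K

variable {f} in
lemma Small.mono {J J' : Set I} (h : J ⊆ J') (hs : Small f J') : Small f J :=
  fun a ha => hs a fun i hi => ha i fun hmem => hi (h hmem)

/-- The part of `a` supported in `J`. -/
noncomputable def proj (J : Set I) (a : ∀ i, H i) : ∀ i, H i :=
  fun i => if i ∈ J then a i else 1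

lemma proj_mem (J : Set I) (a : ∀ i, H i) : proj J a ∈ suppIn H J :=
  fun i hi => if_neg hi

lemma proj_mul_projc (J : Set I) (a : ∀ i, H i) : proj J a * proj Jᶜ a = a := by
  funext i
  by_cases h : i ∈ J <;> simp [proj, h, Pi.mul_apply]

lemma small_union {J J' : Set I} (h : Small f J) (h' : Small f J') :
    Small f (J ∪ J') := by
  intro a ha
  have hd : a = proj J a * proj Jᶜ a := (proj_mul_projc J a).symm
  rw [hd, map_mul]
  refine Subgroup.mul_mem _ (h _ (proj_mem J a)) (h' _ ?_)
  intro i hi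
  by_cases hj : i ∈ J
  · exact if_neg (by simpa using hj)
  · simp only [proj]
    split
    · exact ha i (by simp [hj, hi])
    · rfl

lemma small_empty : Small f (∅ : Set I) := by
  intro a ha
  have : a = 1 := funext fun i => ha i (by simp)
  simp [this, Subgroup.one_mem]

/-- The image of the `J`-supported subgroup. -/
def Afac (J : Set I) : Subgroup K := Subgroup.map f (suppIn H J)

lemma mem_Afac_of {J : Set I} {a : ∀ i, H i} (ha : ∀ i, i ∉ J → a i = 1) :
    f a ∈ Afac f J :=
  Subgroup.mem_map.mpr ⟨a, ha, rfl⟩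

/-- The double centralizer of `Afac J`. -/
def Bfac (J : Set I) : Subgroup K :=
  Subgroup.centralizer ↑(Subgroup.centralizer (Afac f J : Set K))

lemma Afac_mono {J J' : Set I} (h : J ⊆ J') : Afac f J ≤ Afac f J' := by
  apply Subgroup.map_mono
  intro a ha i hi
  exact ha i fun hm => hi (h hm)

lemma Bfac_mono {J J' : Set I} (h : J ⊆ J') : Bfac f J ≤ Bfac f J' := by
  apply Subgroup.centralizer_le
  exact Subgroup.centralizer_le (fun x hx => Afac_mono f h hx)

lemma le_centralizer_centralizer' (A : Subgroup K) :
    A ≤ Subgroup.centralizer ↑(Subgroup.centralizer (A : Set K)) := by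
  intro x hx
  rw [Subgroup.mem_centralizer_iff]
  intro h hh
  exact (hh x hx).symm

lemma ccc (A : Subgroup K) :
    Subgroup.centralizer
        ((Subgroup.centralizer ((Subgroup.centralizer (A : Set K) : Subgroup K) : Set K) : Subgroup K) : Set K)
      = Subgroup.centralizer (A : Set K) := by
  apply le_antisymm
  · exact Subgroup.centralizer_le (fun x hx => le_centralizer_centralizer' A hx)
  · exact Subgroup.le_centralizer_iff.mpr le_rfl

lemma centralizer_normal {A : Subgroup K} (hA : A.Normal) :
    (Subgroup.centralizer (A : Set K)).Normal := by
  constructor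
  intro x hx g
  rw [Subgroup.mem_centralizer_iff] at hx ⊢
  intro y hy
  have hy' : g⁻¹ * y * g ∈ A := by simpa using hA.conj_mem y hy g⁻¹
  have h := hx _ hy'
  have h2 := congrArg (fun z => g * z * g⁻¹) h
  simpa [mul_assoc] using h2

lemma fcomm {J J' : Set I} (hd : ∀ i, i ∈ J' → i ∉ J) {a : ∀ i, H i}
    (ha : ∀ i, i ∉ J' → a i = 1) :
    f a ∈ Subgroup.centralizer (Afac f J : Set K) := by
  rw [Subgroup.mem_centralizer_iff]
  rintro h hh
  obtain ⟨b, hb, rfl⟩ := Subgroup.mem_map.mp hh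
  rw [← map_mul, ← map_mul]
  congr 1
  funext i
  by_cases hi : i ∈ J'
  · have : b i = 1 := mem_suppIn.mp hb i (hd i hi)
    simp [Pi.mul_apply, this]
  · simp [Pi.mul_apply, ha i hi]

variable {f}

lemma bfac_adf (hf : Function.Surjective f) (J : Set I) :
    IsAlmostDirectFactorGrp (Bfac f J) := by
  have hA : (Afac f J).Normal := Subgroup.Normal.map (suppIn_normal J) f hf
  have hC : (Subgroup.centralizer ((Afac f J : Subgroup K) : Set K)).Normal :=
    centralizer_normal hA
  refine ⟨Subgroup.centralizer ((Afac f J : Subgroup K) : Set K),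
    centralizer_normal hC, hC, rfl, (ccc (Afac f J)).symm, ?_⟩
  apply Set.eq_univ_iff_forall.mpr
  intro k
  obtain ⟨a, rfl⟩ := hf k
  rw [← proj_mul_projc J a, map_mul]
  exact Set.mul_mem_mul
    (le_centralizer_centralizer' (Afac f J) (mem_Afac_of f (mem_suppIn.mp (proj_mem J a))))
    (fcomm f (fun i hi => hi) (mem_suppIn.mp (proj_mem Jᶜ a)))

lemma key (hf : Function.Surjective f) {J J' : Set I}
    (hd : ∀ i, i ∈ J' → i ∉ J) (hB : Bfac f (J ∪ J') ≤ Bfac f J) :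
    Small f J' := by
  intro a ha
  have h1 : f a ∈ Bfac f J :=
    hB (le_centralizer_centralizer' _
      (mem_Afac_of f (fun i hi => ha i fun hm => hi (Or.inr hm))))
  have h2 : f a ∈ Subgroup.centralizer (Afac f J : Set K) := fcomm f hd ha
  rw [Subgroup.mem_center_iff]
  intro g
  obtain ⟨b, rfl⟩ := hf g
  rw [← proj_mul_projc J b, map_mul]
  have c1 : f (proj J b) * f a = f a * f (proj J b) :=
    (Subgroup.mem_centralizer_iff.mp h2) _ (mem_Afac_of f (mem_suppIn.mp (proj_mem J b)))
  have c2 : f (proj Jᶜ b) * f a = f a * f (proj Jᶜ b) :=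
    (Subgroup.mem_centralizer_iff.mp h1) _ (fcomm f (fun i hi => hi) (mem_suppIn.mp (proj_mem Jᶜ b)))
  rw [mul_assoc, c2, ← mul_assoc, c1, mul_assoc]

lemma no_disjoint_seq (hf : Function.Surjective f)
    (hcc : ∀ c : ℕ → Subgroup K, Monotone c →
      (∀ j, IsAlmostDirectFactorGrp (c j)) → ∃ N, ∀ j ≥ N, c j = c N) :
    ¬ ∃ J : ℕ → Set I, (∀ m n, m ≠ n → Disjoint (J m) (J n)) ∧ ∀ n, ¬ Small f (J n) := by
  rintro ⟨J, hdisj, hns⟩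
  set W : ℕ → Set I := fun n => {i | ∃ m, m < n ∧ i ∈ J m} with hW
  have hmono : Monotone fun n => Bfac f (W n) := by
    intro m n hmn
    exact Bfac_mono f (fun i hi => by
      obtain ⟨k, hk, hik⟩ := hi
      exact ⟨k, lt_of_lt_of_le hk hmn, hik⟩)
  obtain ⟨N, hN⟩ := hcc _ hmono (fun j => bfac_adf hf (W j))
  have hd : ∀ i, i ∈ J N → i ∉ W N := by
    rintro i hi ⟨m, hm, him⟩
    exact (Set.disjoint_left.mp (hdisj m N (Nat.ne_of_lt hm)) him) hi
  have hWs : W (N + 1) = W N ∪ J N := by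
    ext i
    constructor
    · rintro ⟨m, hm, him⟩
      rcases Nat.lt_succ_iff_lt_or_eq.mp hm with h | rfl
      · exact Or.inl ⟨m, h, him⟩
      · exact Or.inr him
    · rintro (⟨m, hm, him⟩ | hi)
      · exact ⟨m, Nat.lt_succ_of_lt hm, him⟩
      · exact ⟨N, Nat.lt_succ_self N, hi⟩
  have hB : Bfac f (W N ∪ J N) ≤ Bfac f (W N) := by
    rw [← hWs]
    exact (hN (N + 1) (Nat.le_succ N)).le
  exact hns N (key hf hd hB)

variable (f) in
/-- `J` is indecomposable: not small, and any subset is small or co-small in `J`. -/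
def Indec (J : Set I) : Prop :=
  ¬ Small f J ∧ ∀ S, S ⊆ J → Small f S ∨ Small f (J \ S)

lemma exists_indec (hf : Function.Surjective f)
    (hcc : ∀ c : ℕ → Subgroup K, Monotone c →
      (∀ j, IsAlmostDirectFactorGrp (c j)) → ∃ N, ∀ j ≥ N, c j = c N)
    {J : Set I} (hJ : ¬ Small f J) :
    ∃ J', J' ⊆ J ∧ Indec f J' := by
  by_contra hno
  push_neg at hno
  have hstep : ∀ R : Set I, ¬ Small f R → R ⊆ J →
      ∃ S, S ⊆ R ∧ ¬ Small f S ∧ ¬ Small f (R \ S) := by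
    intro R hR hRJ
    have h := hno R hRJ
    unfold Indec at h
    push_neg at h
    obtain ⟨S, hS1, hS2, hS3⟩ := h hR
    exact ⟨S, hS1, hS2, hS3⟩
  let T := {R : Set I // ¬ Small f R ∧ R ⊆ J}
  let step : T → T := fun R =>
    ⟨(hstep R.1 R.2.1 R.2.2).choose,
      (hstep R.1 R.2.1 R.2.2).choose_spec.2.1,
      (hstep R.1 R.2.1 R.2.2).choose_spec.1.trans R.2.2⟩
  let seq : ℕ → T := fun n => step^[n] ⟨J, hJ, subset_rfl⟩
  have hseq : ∀ n, seq (n + 1) = step (seq n) := fun n =>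
    Function.iterate_succ_apply' step n _
  have hsub : ∀ n, (seq (n + 1)).1 ⊆ (seq n).1 := by
    intro n
    rw [hseq n]
    exact (hstep (seq n).1 (seq n).2.1 (seq n).2.2).choose_spec.1
  have hdiff : ∀ n, ¬ Small f ((seq n).1 \ (seq (n + 1)).1) := by
    intro n
    rw [hseq n]
    exact (hstep (seq n).1 (seq n).2.1 (seq n).2.2).choose_spec.2.2
  have hanti : ∀ m n, m ≤ n → (seq n).1 ⊆ (seq m).1 := by
    intro m n h
    induction h with
    | refl => exact subset_rfl
    | step h ih => exact (hsub _).trans ih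
  have key2 : ∀ m n, m < n →
      Disjoint ((seq m).1 \ (seq (m + 1)).1) ((seq n).1 \ (seq (n + 1)).1) := by
    intro m n h
    apply Set.disjoint_left.mpr
    rintro i ⟨_, hnim⟩ ⟨hin, _⟩
    exact hnim (hanti (m + 1) n h hin)
  refine no_disjoint_seq hf hcc
    ⟨fun n => (seq n).1 \ (seq (n + 1)).1, ?_, hdiff⟩
  intro m n hmn
  rcases lt_or_gt_of_ne hmn with h | h
  · exact key2 m n h
  · exact (key2 n m h).symm

variable (f) in
/-- The ultrafilter associated to an indecomposable set. -/
noncomputable def indecUF {J : Set I} (hJ : Indec f J) : Ultrafilter I :=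
  Ultrafilter.ofComplNotMemIff
    { sets := {S | ¬ Small f (S ∩ J)}
      univ_sets := fun h => hJ.1 (Small.mono (J' := Set.univ ∩ J) (fun i hi => ⟨trivial, hi⟩) h)
      sets_of_superset := fun {S T} hS hST h =>
        hS (Small.mono (J' := T ∩ J) (fun i hi => ⟨hST hi.1, hi.2⟩) h)
      inter_sets := fun {S T} hS hT => by
        intro h
        rcases hJ.2 (S ∩ J) Set.inter_subset_right with h' | h'
        · exact hS h'
        · refine hT (Small.mono ?_ (small_union f h h'))
          intro i hi
          by_cases hiS : i ∈ S
          · exact Or.inl ⟨⟨hiS, hi.1⟩, hi.2⟩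
          · exact Or.inr ⟨hi.2, fun hc => hiS hc.1⟩ }
    (by
      intro S
      show ¬¬ Small f (Sᶜ ∩ J) ↔ ¬ Small f (S ∩ J)
      rw [not_not]
      constructor
      · intro h hc
        refine hJ.1 (Small.mono ?_ (small_union f hc h))
        intro i hi
        by_cases hiS : i ∈ S
        · exact Or.inl ⟨hiS, hi⟩
        · exact Or.inr ⟨hiS, hi⟩
      · intro h
        rcases hJ.2 (S ∩ J) Set.inter_subset_right with h' | h'
        · exact absurd h' h
        · refine Small.mono ?_ h'
          intro i hi
          exact ⟨hi.2, fun hc => hi.1 hc.1⟩)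

lemma mem_indecUF {J : Set I} (hJ : Indec f J) {S : Set I} :
    S ∈ indecUF f hJ ↔ ¬ Small f (S ∩ J) := Iff.rfl

variable (f) in
lemma small_biUnion {α : Type*} (s : Finset α) (g : α → Set I)
    (h : ∀ a ∈ s, Small f (g a)) : Small f (⋃ a ∈ s, g a) := by
  classical
  induction s using Finset.induction_on with
  | empty => simpa using small_empty f
  | insert _ _ ha ih =>
    rw [Finset.set_biUnion_insert]
    exact small_union f (h _ (Finset.mem_insert_self _ _))
      (ih fun a haa => h a (Finset.mem_insert_of_mem haa))

end ADFaux

/-- If `f : H = ∏ᵢ Hᵢ → K` is a surjective homomorphism of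
groups, and `K` has chain condition on almost direct factors (every ascending
chain of almost direct factors of `K` terminates), then there are finitely
many ultrafilters `U 0, …, U (n-1)` on `I` such that the composite
`H → K → K/Z(K)` factors through the natural map
`H → H/U 0 × … × H/U (n-1)`, where `Z(K)` is the center of `K`. -/
theorem composite_factors_of_chain_condition_group
    {I : Type u} (H : I → Type u) [∀ i, Group (H i)]
    (K : Type u) [Group K]
    (f : (∀ i, H i) →* K) (hf : Function.Surjective f)
    (hcc : ∀ c : ℕ → Subgroup K, Monotone c →
      (∀ j, IsAlmostDirectFactorGrp (c j)) → ∃ N, ∀ j ≥ N, c j = c N) :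
    ∃ (n : ℕ) (U : Fin n → Ultrafilter I)
      (g : (∀ m, ReducedProduct (U m : Filter I) H) → K ⧸ Subgroup.center K),
      (fun a => QuotientGroup.mk (f a) :
          (∀ i, H i) → K ⧸ Subgroup.center K)
        = g ∘ fun (a : ∀ i, H i) (m : Fin n) => reducedMk (U m : Filter I) H a := by
  classical
  open ADFaux in
  -- a maximal pairwise disjoint family of indecomposable sets
  obtain ⟨F, hF⟩ := zorn_subset
      {F : Set (Set I) | (∀ J ∈ F, ADFaux.Indec f J) ∧ F.Pairwise Disjoint}
      (by
        intro c hcS hchain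
        refine ⟨⋃₀ c, ⟨?_, ?_⟩, fun s hs => Set.subset_sUnion_of_mem hs⟩
        · rintro J ⟨F₁, hF₁, hJ⟩
          exact (hcS hF₁).1 J hJ
        · rintro a ⟨F₁, hF₁, ha⟩ b ⟨F₂, hF₂, hb⟩ hab
          rcases eq_or_ne F₁ F₂ with rfl | hne
          · exact (hcS hF₁).2 ha hb hab
          · rcases hchain hF₁ hF₂ hne with h | h
            · exact (hcS hF₂).2 (h ha) hb hab
            · exact (hcS hF₁).2 ha (h hb) hab)
  have hFind : ∀ J ∈ F, ADFaux.Indec f J := hF.prop.1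
  have hFdisj : F.Pairwise Disjoint := hF.prop.2
  -- the family is finite
  have hFin : F.Finite := by
    by_contra hinf
    haveI := Set.infinite_coe_iff.mpr hinf
    let e := Infinite.natEmbedding ↥F
    refine ADFaux.no_disjoint_seq hf hcc ⟨fun n => (e n).1, ?_, ?_⟩
    · intro m n hmn
      refine hFdisj (e m).2 (e n).2 ?_
      intro hEq
      exact hmn (e.injective (Subtype.ext hEq))
    · exact fun n => (hFind _ (e n).2).1
  haveI : Fintype ↥F := hFin.fintype
  set n := Fintype.card ↥F with hn
  set e : Fin n ≃ ↥F := (Fintype.equivFin ↥F).symm with he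
  set J : Fin n → Set I := fun m => (e m).1 with hJdef
  have hJind : ∀ m, ADFaux.Indec f (J m) := fun m => hFind _ (e m).2
  set U : Fin n → Ultrafilter I := fun m => ADFaux.indecUF f (hJind m) with hU
  -- covering property
  have hcover : ∀ S : Set I, (∀ m, ADFaux.Small f (S ∩ J m)) → ADFaux.Small f S := by
    intro S hm
    by_contra hS
    have hUn : ADFaux.Small f (⋃ m ∈ (Finset.univ : Finset (Fin n)), (S ∩ J m)) :=
      ADFaux.small_biUnion f Finset.univ _ (fun m _ => hm m)
    set S' : Set I := S \ ⋃ m, J m with hS'def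
    have hS' : ¬ ADFaux.Small f S' := by
      intro hsm
      have hsub : S ⊆ S' ∪ ⋃ m ∈ (Finset.univ : Finset (Fin n)), (S ∩ J m) := by
        intro i hi
        by_cases hiU : i ∈ ⋃ m, J m
        · obtain ⟨t, ⟨m, rfl⟩, him⟩ := hiU
          exact Set.mem_union_right _
            (Set.mem_biUnion (Finset.mem_univ m) ⟨hi, him⟩)
        · exact Set.mem_union_left _ ⟨hi, hiU⟩
      exact hS (ADFaux.Small.mono hsub (ADFaux.small_union f hsm hUn))
    obtain ⟨J', hJ'sub, hJ'ind⟩ := ADFaux.exists_indec hf hcc hS'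
    have hJ'disj : ∀ T ∈ F, Disjoint J' T := by
      intro T hT
      have : T = J (e.symm ⟨T, hT⟩) := by
        simp [hJdef, he]
      rw [this]
      apply Set.disjoint_left.mpr
      intro i hiJ' hiT
      obtain ⟨hiS, hiU⟩ := hJ'sub hiJ'
      exact hiU (Set.mem_iUnion.mpr ⟨_, hiT⟩)
    have hJ'nF : J' ∉ F := by
      intro hmem
      have := Set.disjoint_left.mp (hJ'disj J' hmem)
      have hempty : J' = ∅ := by
        ext i; simp only [Set.mem_empty_iff_false, iff_false]
        intro hi; exact this hi hi
      exact hJ'ind.1 (hempty ▸ ADFaux.small_empty f)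
    have hins : insert J' F ∈
        {F : Set (Set I) | (∀ J ∈ F, ADFaux.Indec f J) ∧ F.Pairwise Disjoint} := by
      constructor
      · rintro T (rfl | hT)
        · exact hJ'ind
        · exact hFind T hT
      · rintro a (rfl | haF) b (rfl | hbF) hab
        · exact absurd rfl hab
        · exact hJ'disj b hbF
        · exact (hJ'disj a haF).symm
        · exact hFdisj haF hbF hab
    have := hF.2 hins (Set.subset_insert J' F) (Set.mem_insert J' F)
    exact hJ'nF this
  -- factoring
  have hfac : ∀ a b : ∀ i, H i,
      (∀ m, reducedMk (U m : Filter I) H a = reducedMk (U m : Filter I) H b) →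
      (QuotientGroup.mk (f a) : K ⧸ Subgroup.center K) = QuotientGroup.mk (f b) := by
    intro a b hab
    set T : Set I := {i | a i = b i} with hTdef
    have hT : ∀ m, T ∈ U m := fun m => Quotient.exact (hab m)
    have hTc : ∀ m, ADFaux.Small f (Tᶜ ∩ J m) := by
      intro m
      have hnm : Tᶜ ∉ U m := Ultrafilter.compl_notMem_iff.mpr (hT m)
      by_contra h
      exact hnm ((ADFaux.mem_indecUF (hJind m)).mpr h)
    have hsmall : ADFaux.Small f Tᶜ := hcover Tᶜ hTc
    rw [QuotientGroup.eq]
    have hfab : (f a)⁻¹ * f b = f (a⁻¹ * b) := by rw [map_mul, map_inv]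
    rw [hfab]
    apply hsmall
    intro i hi
    have hiT : a i = b i := not_not.mp hi
    simp [Pi.mul_apply, Pi.inv_apply, hiT]
  refine ⟨n, U, fun x =>
    if h : ∃ a, (fun m => reducedMk (U m : Filter I) H a) = x
    then QuotientGroup.mk (f h.choose) else 1, ?_⟩
  funext a
  have hex : ∃ b, (fun m => reducedMk (U m : Filter I) H b)
      = (fun m => reducedMk (U m : Filter I) H a) := ⟨a, rfl⟩
  show (QuotientGroup.mk (f a) : K ⧸ Subgroup.center K) = _
  simp only [Function.comp_apply]
  rw [dif_pos hex]
  exact (hfac hex.choose a (fun m => congrFun hex.choose_spec m)).symm
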